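/- (Osgood/log-Gronwall estimate) Define ω(r) = r(1 − log r) for 0 < r < 1 and ω(r) = 1 for r ≥ 1. Let C, T > 0 and suppose a family of nonnegative continuous functions f_ε on [0,T] satisfies f_ε(t)^2 ≤ C ∫_0^t f_ε(s) ω(f_ε(s)) ds + C ω(ε) T for all t ∈ [0,T], where ε is small enough that C ω(ε) T < 1. Then there exist constants C_T > 0 and Λ_0 ∈ (0, 1/2), depending only on C and T, such that whenever ω(ε) ≤ Λ_0, sup_{t∈[0,T]} f_ε(t) ≤ C_T ω(ε)^{(1/2) e^{−CT}} < 1. -/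

import Mathlib

set_option maxHeartbeats 1000000


open Real MeasureTheory intervalIntegral

/-- Monotonicity of `r ↦ r²(1 - log r)` on `(0,1]`. -/
lemma osgood_aux_mono : StrictMonoOn (fun r : ℝ => r ^ 2 * (1 - Real.log r)) (Set.Ioc 0 1) := by
  apply strictMonoOn_of_deriv_pos (convex_Ioc 0 1)
  · apply ContinuousOn.mul (continuous_pow 2).continuousOn
    exact continuousOn_const.sub
      (Real.continuousOn_log.mono (by intro x hx; exact ne_of_gt hx.1))
  · rw [interior_Ioc]
    intro x hx
    have hx0 : (0:ℝ) < x := hx.1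
    have hd : HasDerivAt (fun r : ℝ => r ^ 2 * (1 - Real.log r))
        (x * (1 - 2 * Real.log x)) x := by
      have h1 := (hasDerivAt_pow 2 x).mul
        ((hasDerivAt_const x (1:ℝ)).sub (Real.hasDerivAt_log hx0.ne'))
      refine h1.congr_deriv ?_
      simp only [Pi.sub_apply]
      field_simp
      ring
    rw [hd.deriv]
    have hlog : Real.log x < 0 := Real.log_neg hx0 hx.2
    nlinarith

/-- Osgood/log-Gronwall estimate with the log-Lipschitz modulus
`ω(r) = r(1 − log r)` for `0 < r < 1`, `ω(r) = 1` for `r ≥ 1`: a family of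
nonnegative continuous functions satisfying
`f_ε(t)² ≤ C ∫_0^t f_ε ω(f_ε) + C ω(ε) T` obeys the uniform rate
`sup_{[0,T]} f_ε ≤ C_T ω(ε)^{(1/2)e^{−CT}} < 1` whenever `ω(ε) ≤ Λ₀`. -/
theorem osgood_log_gronwall
    (w : ℝ → ℝ)
    (hw : ∀ r : ℝ, w r = if 1 ≤ r then 1 else r * (1 - Real.log r))
    (C T : ℝ) (hC : 0 < C) (hT : 0 < T) :
    ∃ C_T : ℝ, 0 < C_T ∧ ∃ Λ0 : ℝ, 0 < Λ0 ∧ Λ0 < 1 / 2 ∧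
      ∀ (ε : ℝ) (f : ℝ → ℝ), 0 < ε →
        ContinuousOn f (Set.Icc 0 T) →
        (∀ t ∈ Set.Icc (0 : ℝ) T, 0 ≤ f t) →
        C * w ε * T < 1 →
        (∀ t ∈ Set.Icc (0 : ℝ) T,
          (f t) ^ 2 ≤ (C * ∫ s in (0 : ℝ)..t, f s * w (f s)) + C * w ε * T) →
        w ε ≤ Λ0 →
        ∀ t ∈ Set.Icc (0 : ℝ) T,
          f t ≤ C_T * (w ε) ^ ((1 / 2) * Real.exp (-C * T)) ∧
          C_T * (w ε) ^ ((1 / 2) * Real.exp (-C * T)) < 1 := by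
  -- basic facts about w
  have hwle : ∀ r : ℝ, 0 < r → r ≤ 1 → w r = r * (1 - Real.log r) := by
    intro r h0 h1
    rcases eq_or_lt_of_le h1 with h | h
    · rw [hw, if_pos (le_of_eq h.symm), h]
      simp [Real.log_one]
    · rw [hw, if_neg (not_le.2 h)]
  have hwcont : Continuous w := by
    have hwe : w = fun r => if (1:ℝ) ≤ r then (1:ℝ) else r * (1 - Real.log r) := funext hw
    rw [hwe]
    have hg : Continuous fun r : ℝ => r * (1 - Real.log r) := by
      have h1 : Continuous fun r : ℝ => r - r * Real.log r :=
        continuous_id.sub Real.continuous_mul_log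
      have h2 : (fun r : ℝ => r * (1 - Real.log r)) = fun r : ℝ => r - r * Real.log r := by
        funext r; ring
      rw [h2]; exact h1
    apply Continuous.if_le continuous_const hg continuous_const continuous_id
    intro a ha
    simp only [id_eq] at ha
    rw [← ha]
    simp [Real.log_one]
  have hwnn : ∀ r : ℝ, 0 ≤ r → 0 ≤ w r := by
    intro r hr
    rw [hw]
    split_ifs with h
    · norm_num
    · push_neg at h
      have : Real.log r ≤ 0 := Real.log_nonpos hr h.le
      apply mul_nonneg hr
      linarith
  set β := Real.exp (-C * T) with hβ
  have hβpos : 0 < β := Real.exp_pos _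
  have hβle1 : β ≤ 1 := Real.exp_le_one_iff.2 (by nlinarith)
  set C_T := Real.exp 1 * (2*C*T) ^ ((1/2 : ℝ) * β) with hCT
  have hCTpos : 0 < C_T :=
    mul_pos (Real.exp_pos 1) (Real.rpow_pos_of_pos (by positivity) _)
  set Λ0 := min (1/4 : ℝ)
    (min (Real.exp (2 - 2*Real.exp (C*T)) / (2*C*T)) ((2*C_T) ^ (-2/β))) with hΛ
  have hΛpos : 0 < Λ0 := by
    apply lt_min (by norm_num)
    apply lt_min
    · positivity
    · exact Real.rpow_pos_of_pos (by positivity) _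
  have hΛquarter : Λ0 ≤ 1/4 := min_le_left _ _
  refine ⟨C_T, hCTpos, Λ0, hΛpos, by linarith, ?_⟩
  intro ε f hε hfc hfnn hsmall hineq hωΛ
  set ω := w ε with hωdef
  have hωpos : 0 < ω := by
    by_cases h1 : (1:ℝ) ≤ ε
    · exfalso
      have : ω = 1 := by rw [hωdef, hw, if_pos h1]
      rw [this] at hωΛ
      linarith
    · push_neg at h1
      rw [hωdef, hwle ε hε h1.le]
      have : Real.log ε < 0 := Real.log_neg hε h1
      apply mul_pos hε
      linarith
  set A := C * ω * T with hAdef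
  have hA : 0 < A := by positivity
  have h2A_pos : 0 < 2*A := by linarith
  -- smallness of A
  have hΛ2 : Λ0 ≤ Real.exp (2 - 2*Real.exp (C*T)) / (2*C*T) :=
    le_trans (min_le_right _ _) (min_le_left _ _)
  have h2A_le : 2*A ≤ Real.exp (2 - 2*Real.exp (C*T)) := by
    have hct : (0:ℝ) < 2*C*T := by positivity
    have h1 : ω ≤ Real.exp (2 - 2*Real.exp (C*T)) / (2*C*T) := hωΛ.trans hΛ2
    have h2 : ω * (2*C*T) ≤ Real.exp (2 - 2*Real.exp (C*T)) := (le_div_iff₀ hct).1 h1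
    calc 2*A = ω * (2*C*T) := by rw [hAdef]; ring
    _ ≤ _ := h2
  set φ0 := Real.sqrt (2*A) with hφ0def
  have hφ0pos : 0 < φ0 := Real.sqrt_pos.2 h2A_pos
  set b := 1 - Real.log φ0 with hb
  have hbge : Real.exp (C*T) ≤ b := by
    have h1 : φ0 ≤ Real.exp (1 - Real.exp (C*T)) := by
      have h2 : φ0 ≤ Real.sqrt (Real.exp (2 - 2*Real.exp (C*T))) :=
        Real.sqrt_le_sqrt h2A_le
      have h3 : Real.sqrt (Real.exp (2 - 2*Real.exp (C*T)))
          = Real.exp (1 - Real.exp (C*T)) := by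
        rw [show (2 - 2*Real.exp (C*T))
            = (1 - Real.exp (C*T)) + (1 - Real.exp (C*T)) by ring,
          Real.exp_add, Real.sqrt_mul_self (Real.exp_pos _).le]
      rwa [h3] at h2
    have h2 : Real.log φ0 ≤ 1 - Real.exp (C*T) :=
      (Real.log_le_iff_le_exp hφ0pos).2 h1
    rw [hb]; linarith
  have hbpos : 0 < b := lt_of_lt_of_le (Real.exp_pos _) hbge
  set φ : ℝ → ℝ := fun t => Real.exp (1 - b * Real.exp (-C * t)) with hφdef
  have hφcont : Continuous φ := by fun_prop
  have hφpos : ∀ t, 0 < φ t := fun t => Real.exp_pos _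
  have hφlog : ∀ t, Real.log (φ t) = 1 - b * Real.exp (-C*t) := fun t => Real.log_exp _
  have hφle1 : ∀ t ∈ Set.Icc (0:ℝ) T, φ t ≤ 1 := by
    intro t ht
    have h1 : Real.exp (C*T) * Real.exp (-C*t) = Real.exp (C*(T - t)) := by
      rw [← Real.exp_add]; ring_nf
    have h2 : (1:ℝ) ≤ Real.exp (C*(T - t)) :=
      Real.one_le_exp (by nlinarith [ht.2])
    have h3 : (1:ℝ) ≤ b * Real.exp (-C*t) := by
      calc (1:ℝ) ≤ Real.exp (C*(T-t)) := h2
      _ = Real.exp (C*T) * Real.exp (-C*t) := h1.symm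
      _ ≤ b * Real.exp (-C*t) :=
        mul_le_mul_of_nonneg_right hbge (Real.exp_pos _).le
    exact Real.exp_le_one_iff.2 (by linarith)
  have hφ0val : φ 0 = φ0 := by
    rw [hφdef]
    simp only [mul_zero, Real.exp_zero, mul_one]
    rw [hb, show (1 : ℝ) - (1 - Real.log φ0) = Real.log φ0 by ring,
      Real.exp_log hφ0pos]
  have hφsq0 : (φ 0)^2 = 2*A := by
    rw [hφ0val, hφ0def, Real.sq_sqrt h2A_pos.le]
  have hφd : ∀ t : ℝ, HasDerivAt φ (C * (φ t * (1 - Real.log (φ t)))) t := by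
    intro t
    have h1 : HasDerivAt (fun t : ℝ => -C * t) (-C) t := by
      simpa using (hasDerivAt_id t).const_mul (-C)
    have h2 : HasDerivAt (fun t : ℝ => Real.exp (-C*t)) (Real.exp (-C*t) * (-C)) t := h1.exp
    have h3 : HasDerivAt (fun t : ℝ => 1 - b * Real.exp (-C*t))
        (-(b * (Real.exp (-C*t) * -C))) t := (h2.const_mul b).const_sub 1
    have h4 := h3.exp
    convert h4 using 1
    rw [hφlog]
    ring
  -- the barrier argument
  have key : ∀ t ∈ Set.Icc (0:ℝ) T, f t < φ t := by
    by_contra hcon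
    push_neg at hcon
    obtain ⟨t0, ht0, ht0f⟩ := hcon
    set S := Set.Icc (0:ℝ) T ∩ (fun t => f t - φ t) ⁻¹' Set.Ici 0 with hSdef
    have hSne : S.Nonempty := ⟨t0, ht0, by simp [Set.mem_preimage]; linarith⟩
    have hSbdd : BddBelow S := ⟨0, fun x hx => hx.1.1⟩
    have hSclosed : IsClosed S :=
      (hfc.sub hφcont.continuousOn).preimage_isClosed_of_isClosed isClosed_Icc isClosed_Ici
    set t1 := sInf S with ht1def
    have ht1S : t1 ∈ S := hSclosed.csInf_mem hSne hSbdd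
    have ht1mem : t1 ∈ Set.Icc (0:ℝ) T := ht1S.1
    have ht1f : φ t1 ≤ f t1 := by
      have := ht1S.2
      simp only [Set.mem_preimage, Set.mem_Ici] at this
      linarith
    have hlt : ∀ s ∈ Set.Ico (0:ℝ) t1, f s < φ s := by
      intro s hs
      by_contra h
      push_neg at h
      have hsS : s ∈ S := ⟨⟨hs.1, hs.2.le.trans ht1mem.2⟩, by
        simp only [Set.mem_preimage, Set.mem_Ici]; linarith⟩
      have := csInf_le hSbdd hsS
      rw [← ht1def] at this
      linarith [hs.2]
    have hfwc : ContinuousOn (fun s => f s * w (f s)) (Set.Icc 0 T) :=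
      hfc.mul (hwcont.comp_continuousOn hfc)
    have hicc_sub : Set.Icc (0:ℝ) t1 ⊆ Set.Icc 0 T := Set.Icc_subset_Icc le_rfl ht1mem.2
    have hint_f : IntervalIntegrable (fun s => f s * w (f s)) volume 0 t1 := by
      apply ContinuousOn.intervalIntegrable
      rw [Set.uIcc_of_le ht1mem.1]
      exact hfwc.mono hicc_sub
    have hφwc : Continuous (fun s => φ s * w (φ s)) := hφcont.mul (hwcont.comp hφcont)
    have hint_φ : IntervalIntegrable (fun s => φ s * w (φ s)) volume 0 t1 :=
      hφwc.intervalIntegrable _ _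
    -- pointwise comparison on Ico
    have hptwise : ∀ s ∈ Set.Ico (0:ℝ) t1, f s * w (f s) ≤ φ s * w (φ s) := by
      intro s hs
      have hsT : s ∈ Set.Icc (0:ℝ) T := ⟨hs.1, hs.2.le.trans ht1mem.2⟩
      have hfs := hfnn s hsT
      have hflt := hlt s hs
      have hφ1 := hφle1 s hsT
      have hRHSnn : 0 ≤ φ s * w (φ s) :=
        mul_nonneg (hφpos s).le (hwnn _ (hφpos s).le)
      rcases eq_or_lt_of_le hfs with h0 | h0
      · rw [← h0]
        simpa using hRHSnn
      · have hfΙ : f s ∈ Set.Ioc (0:ℝ) 1 := ⟨h0, hflt.le.trans hφ1⟩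
        have hφΙ : φ s ∈ Set.Ioc (0:ℝ) 1 := ⟨hφpos s, hφ1⟩
        have hmono := (osgood_aux_mono hfΙ hφΙ hflt).le
        rw [hwle (f s) h0 hfΙ.2, hwle (φ s) (hφpos s) hφ1]
        calc f s * (f s * (1 - Real.log (f s)))
            = (f s)^2 * (1 - Real.log (f s)) := by ring
        _ ≤ (φ s)^2 * (1 - Real.log (φ s)) := hmono
        _ = φ s * (φ s * (1 - Real.log (φ s))) := by ring
    have hintle : (∫ s in (0:ℝ)..t1, f s * w (f s)) ≤ ∫ s in (0:ℝ)..t1, φ s * w (φ s) := by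
      apply intervalIntegral.integral_mono_ae_restrict ht1mem.1 hint_f hint_φ
      have hmem := MeasureTheory.ae_restrict_mem (μ := (volume : Measure ℝ))
        (measurableSet_Icc : MeasurableSet (Set.Icc (0:ℝ) t1))
      have hne : ∀ᵐ s ∂(volume.restrict (Set.Icc (0:ℝ) t1)), s ≠ t1 := by
        refine (MeasureTheory.ae_iff).2 ?_
        have h1 : {s : ℝ | ¬ s ≠ t1} = {t1} := by ext x; simp
        rw [h1, Measure.restrict_apply (measurableSet_singleton _)]
        exact measure_mono_null Set.inter_subset_left (measure_singleton _)
      filter_upwards [hmem, hne] with s hs hsne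
      exact hptwise s ⟨hs.1, lt_of_le_of_ne hs.2 hsne⟩
    -- FTC
    have hFTC : (∫ s in (0:ℝ)..t1, 2*C*(φ s * w (φ s))) = (φ t1)^2 - (φ 0)^2 := by
      apply intervalIntegral.integral_eq_sub_of_hasDerivAt (f := fun t => φ t ^ 2)
      · intro s hs
        rw [Set.uIcc_of_le ht1mem.1] at hs
        have hsT : s ∈ Set.Icc (0:ℝ) T := hicc_sub hs
        have hder := (hφd s).pow 2
        have hwφ : w (φ s) = φ s * (1 - Real.log (φ s)) :=
          hwle _ (hφpos s) (hφle1 s hsT)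
        refine hder.congr_deriv ?_
        rw [hwφ]
        push_cast
        ring
      · exact (continuous_const.mul hφwc).intervalIntegrable _ _
    have hineq1 := hineq t1 ht1mem
    have hintφval : C * (∫ s in (0:ℝ)..t1, φ s * w (φ s)) = ((φ t1)^2 - 2*A)/2 := by
      have h1 : (∫ s in (0:ℝ)..t1, 2*C*(φ s * w (φ s)))
          = 2*C*∫ s in (0:ℝ)..t1, (φ s * w (φ s)) := by
        rw [← intervalIntegral.integral_const_mul]
      rw [h1, hφsq0] at hFTC
      linarith
    have hφt1sq : (φ t1)^2 ≤ (f t1)^2 := pow_le_pow_left₀ (hφpos t1).le ht1f 2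
    have h5 : C * (∫ s in (0:ℝ)..t1, f s * w (f s))
        ≤ C * (∫ s in (0:ℝ)..t1, φ s * w (φ s)) :=
      mul_le_mul_of_nonneg_left hintle hC.le
    have hposφ : 0 < (φ t1)^2 := pow_pos (hφpos t1) 2
    linarith [hineq1, h5, hintφval, hφt1sq, hA, hposφ]
  -- conclusion
  intro t ht
  have hft := (key t ht).le
  have hφmono : φ t ≤ φ T := by
    apply Real.exp_le_exp.2
    have h1 : Real.exp (-C*T) ≤ Real.exp (-C*t) :=
      Real.exp_le_exp.2 (by nlinarith [ht.2])
    nlinarith [hbpos]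
  have hφT : φ T = Real.exp (1 - β) * (2*A) ^ ((1/2 : ℝ) * β) := by
    have hlogφ0 : Real.log φ0 = Real.log (2*A) / 2 := Real.log_sqrt h2A_pos.le
    show Real.exp (1 - b * Real.exp (-C * T)) = _
    rw [← hβ, show 1 - b*β = (1-β) + Real.log (2*A) * ((1/2 : ℝ)*β) by
        rw [hb, hlogφ0]; ring,
      Real.exp_add, Real.rpow_def_of_pos h2A_pos]
  have h2Aω : (2*A) ^ ((1/2 : ℝ)*β) = (2*C*T) ^ ((1/2 : ℝ)*β) * ω ^ ((1/2 : ℝ)*β) := by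
    rw [← Real.mul_rpow (by positivity) hωpos.le]
    congr 1
    rw [hAdef]; ring
  have hbound : φ T ≤ C_T * ω ^ ((1/2 : ℝ)*β) := by
    rw [hφT, h2Aω, hCT]
    have h1 : Real.exp (1-β) ≤ Real.exp 1 := Real.exp_le_exp.2 (by linarith)
    have hnn : 0 ≤ (2*C*T) ^ ((1/2 : ℝ)*β) * ω ^ ((1/2 : ℝ)*β) := by positivity
    nlinarith [mul_le_mul_of_nonneg_right h1 hnn]
  have hsmall2 : C_T * ω ^ ((1/2 : ℝ)*β) < 1 := by
    have hΛ3 : Λ0 ≤ (2*C_T) ^ (-2/β) :=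
      le_trans (min_le_right _ _) (min_le_right _ _)
    have hωe : ω ^ ((1/2 : ℝ)*β) ≤ ((2*C_T) ^ (-2/β)) ^ ((1/2 : ℝ)*β) :=
      Real.rpow_le_rpow hωpos.le (hωΛ.trans hΛ3) (by positivity)
    have heq : ((2*C_T) ^ (-2/β)) ^ ((1/2 : ℝ)*β) = (2*C_T)⁻¹ := by
      rw [← Real.rpow_mul (by positivity : (0:ℝ) ≤ 2*C_T),
        show (-2/β) * ((1/2 : ℝ)*β) = -1 by field_simp,
        Real.rpow_neg_one]
    rw [heq] at hωe
    calc C_T * ω ^ ((1/2 : ℝ)*β) ≤ C_T * (2*C_T)⁻¹ :=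
        mul_le_mul_of_nonneg_left hωe hCTpos.le
    _ = 1/2 := by field_simp
    _ < 1 := by norm_num
  exact ⟨hft.trans (hφmono.trans hbound), hsmall2⟩
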